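/- Let p be a probability mass function sorted nonincreasingly with p K > 0 and suppose the tail mass ∑_{i>K} p i = 0 (i.e., the top-K carry all probability). Then H(p) = PRO_K + (∑_{i=1}^{K} p i - 1) * log (p K) = PRO_K, so the lower bound of Proposition 1 is tight. -/

import Mathlib

/-- Tightness of Proposition 1: when the tail mass beyond the top-K vanishes,
the entropy equals the PRO score (the residual term vanishes). -/
theorem entropy_eq_PRO_of_tail_zero (p : ℕ → ℝ) (K : ℕ)
    (hnn : ∀ i, 0 ≤ p i)
    (hs : Summable (fun i => p (i + 1)))
    (hsum : ∑' i, p (i + 1) = 1)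
    (hsort : ∀ i j, 1 ≤ i → i ≤ j → p j ≤ p i)
    (hK : 1 ≤ K) (hpK : 0 < p K)
    (htail : ∑' j : ℕ, p (K + 1 + j) = 0) :
    (-∑' i, p (i + 1) * Real.log (p (i + 1)) =
        (-Real.log (p K) - ∑ i ∈ Finset.Icc 1 K, p i * Real.log (p i / p K)) +
          (∑ i ∈ Finset.Icc 1 K, p i - 1) * Real.log (p K)) ∧
      -∑' i, p (i + 1) * Real.log (p (i + 1)) =
        -Real.log (p K) - ∑ i ∈ Finset.Icc 1 K, p i * Real.log (p i / p K) := by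
  -- summability of the tail
  have hst : Summable (fun j : ℕ => p (K + 1 + j)) := by
    have := (summable_nat_add_iff (f := fun i => p (i + 1)) K).2 hs
    convert this using 2 with j
    · rfl
    ring_nf
  have hzero : ∀ j : ℕ, p (K + 1 + j) = 0 := by
    intro j
    have hle : p (K + 1 + j) ≤ 0 := by
      calc p (K + 1 + j) ≤ ∑' j : ℕ, p (K + 1 + j) :=
            Summable.le_tsum hst j (fun _ _ => hnn _)
        _ = 0 := htail
    exact le_antisymm hle (hnn _)
  have hvan : ∀ i ∉ Finset.range K, p (i + 1) = 0 := by
    intro i hi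
    have hiK : K ≤ i := by simpa using hi
    have : i + 1 = K + 1 + (i - K) := by omega
    rw [this]; exact hzero _
  have hvan' : ∀ i ∉ Finset.range K, p (i + 1) * Real.log (p (i + 1)) = 0 := by
    intro i hi; rw [hvan i hi]; simp
  have hIcc : ∀ f : ℕ → ℝ, ∑ i ∈ Finset.Icc 1 K, f i = ∑ i ∈ Finset.range K, f (i + 1) := by
    intro f
    rw [show Finset.Icc 1 K = Finset.Ico 1 (K + 1) by rfl,
      Finset.sum_Ico_eq_sum_range]
    simp [add_comm]
  have hsum1 : ∑ i ∈ Finset.Icc 1 K, p i = 1 := by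
    rw [hIcc, ← tsum_eq_sum (L := SummationFilter.unconditional ℕ) hvan, hsum]
  have hEnt : ∑' i, p (i + 1) * Real.log (p (i + 1)) =
      ∑ i ∈ Finset.Icc 1 K, p i * Real.log (p i) := by
    rw [hIcc, ← tsum_eq_sum (L := SummationFilter.unconditional ℕ) hvan']
  have hpos : ∀ i ∈ Finset.Icc 1 K, 0 < p i := by
    intro i hi
    rcases Finset.mem_Icc.1 hi with ⟨h1, h2⟩
    exact lt_of_lt_of_le hpK (hsort i K h1 h2)
  have hdiv : ∑ i ∈ Finset.Icc 1 K, p i * Real.log (p i / p K) =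
      ∑ i ∈ Finset.Icc 1 K, (p i * Real.log (p i) - p i * Real.log (p K)) := by
    refine Finset.sum_congr rfl fun i hi => ?_
    rw [Real.log_div (hpos i hi).ne' hpK.ne']
    ring
  have key : -∑' i, p (i + 1) * Real.log (p (i + 1)) =
      -Real.log (p K) - ∑ i ∈ Finset.Icc 1 K, p i * Real.log (p i / p K) := by
    rw [hEnt, hdiv, Finset.sum_sub_distrib, ← Finset.sum_mul, hsum1]
    ring
  exact ⟨by rw [key, hsum1]; ring, key⟩
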